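/- Let p, q, ν > 0 be real numbers. The function g(ξ) = ξ + (1/2) sinh(2ξ) is a strictly increasing differentiable bijection from (0, ∞) onto (0, ∞); let ξ : (0, ∞) → (0, ∞) be defined by ξ(τ) + (1/2) sinh(2ξ(τ)) = 2(p²/q²) ν τ. Then a(τ) = (1/ν) tanh(ξ(τ)) satisfies a'(τ) = (p²/q²)(1 − ν² a(τ)²)² for all τ > 0, and together with b(τ) = (q²/(pν)) sinh(ξ(τ)) cosh(ξ(τ)) the pair (a, b) solves the ODE system a' = q² a²/b², b' = 2p − q² a/b, with a/b = (p/q²)(1 − ν² a²). -/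

import Mathlib

open Real Set Filter

/-- the explicit solution, for m = 1, of the U(1)-bundle Ricci flow ODE system:
`g(ξ) = ξ + ½ sinh 2ξ` is a strictly increasing differentiable bijection of `(0,∞)`, and with
`ξ(τ)` defined implicitly by `g(ξ(τ)) = 2(p²/q²)ντ`, the functions `a = (1/ν) tanh ξ`,
`b = (q²/(pν)) sinh ξ cosh ξ` solve `a' = q²a²/b²`, `b' = 2p − q²a/b`, with
`a' = (p²/q²)(1 − ν²a²)²` and `a/b = (p/q²)(1 − ν²a²)`. -/
theorem stmt_19 (p q ν : ℝ) (hp : 0 < p) (hq : 0 < q) (hν : 0 < ν)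
    (g : ℝ → ℝ) (hg : ∀ x, g x = x + 1 / 2 * Real.sinh (2 * x))
    (ξ : ℝ → ℝ) (hξpos : ∀ τ ∈ Set.Ioi (0 : ℝ), 0 < ξ τ)
    (hξ : ∀ τ ∈ Set.Ioi (0 : ℝ),
      ξ τ + 1 / 2 * Real.sinh (2 * ξ τ) = 2 * (p ^ 2 / q ^ 2) * ν * τ)
    (a b : ℝ → ℝ)
    (hadef : ∀ τ, a τ = 1 / ν * Real.tanh (ξ τ))
    (hbdef : ∀ τ, b τ = q ^ 2 / (p * ν) * (Real.sinh (ξ τ) * Real.cosh (ξ τ))) :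
    (∀ x ∈ Set.Ioi (0 : ℝ), DifferentiableAt ℝ g x) ∧
    StrictMonoOn g (Set.Ioi 0) ∧
    Set.BijOn g (Set.Ioi 0) (Set.Ioi 0) ∧
    (∀ τ ∈ Set.Ioi (0 : ℝ),
      HasDerivAt a (p ^ 2 / q ^ 2 * (1 - ν ^ 2 * (a τ) ^ 2) ^ 2) τ ∧
      HasDerivAt a (q ^ 2 * (a τ) ^ 2 / (b τ) ^ 2) τ ∧
      HasDerivAt b (2 * p - q ^ 2 * a τ / b τ) τ ∧
      a τ / b τ = p / q ^ 2 * (1 - ν ^ 2 * (a τ) ^ 2)) := by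
  -- derivative of g
  have hgd : ∀ x : ℝ, HasDerivAt g (1 + Real.cosh (2 * x)) x := by
    intro x
    have h1 : HasDerivAt (fun x : ℝ => x + 1 / 2 * Real.sinh (2 * x))
        (1 + 1 / 2 * (Real.cosh (2 * x) * 2)) x := by
      have hs : HasDerivAt (fun x : ℝ => Real.sinh (2 * x)) (Real.cosh (2 * x) * 2) x :=
        (Real.hasDerivAt_sinh (2 * x)).comp x (by simpa using (hasDerivAt_id x).const_mul (2:ℝ))
      exact (hasDerivAt_id x).add (hs.const_mul (1 / 2))
    have : (fun x : ℝ => x + 1 / 2 * Real.sinh (2 * x)) = g := by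
      funext y; rw [hg y]
    rw [this] at h1
    have h2 : 1 + 1 / 2 * (Real.cosh (2 * x) * 2) = 1 + Real.cosh (2 * x) := by ring
    rw [h2] at h1; exact h1
  have hgcont : Continuous g := by
    have := fun x => (hgd x).differentiableAt
    exact (Differentiable.continuous this)
  -- strict monotonicity on all of ℝ
  have hgmono : StrictMono g := by
    apply strictMono_of_deriv_pos
    intro x
    rw [(hgd x).deriv]
    positivity
  have hg0 : g 0 = 0 := by rw [hg]; simp
  -- surjectivity of g : ℝ → ℝ
  have hgsurj : Function.Surjective g := by
    intro y
    have h1 : g (-(|y| + 1)) ≤ y := by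
      have : g (-(|y| + 1)) ≤ -(|y| + 1) := by
        rw [hg]
        have : Real.sinh (2 * -(|y| + 1)) ≤ 0 :=
          Real.sinh_nonpos_iff.mpr (by nlinarith [abs_nonneg y])
        nlinarith
      nlinarith [neg_abs_le y, abs_nonneg y]
    have h2 : y ≤ g (|y| + 1) := by
      have : (|y| + 1) ≤ g (|y| + 1) := by
        rw [hg]
        have : 0 ≤ Real.sinh (2 * (|y| + 1)) :=
          Real.sinh_nonneg_iff.mpr (by nlinarith [abs_nonneg y])
        nlinarith
      nlinarith [le_abs_self y]
    obtain ⟨x, _, hx⟩ := intermediate_value_Icc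
      (by nlinarith [abs_nonneg y] : -(|y| + 1) ≤ (|y| + 1)) (hgcont.continuousOn) ⟨h1, h2⟩
    exact ⟨x, hx⟩
  -- the continuous inverse
  set e := StrictMono.orderIsoOfSurjective g hgmono hgsurj with he
  have hψcont : Continuous (e.symm) := e.symm.continuous
  have hψright : ∀ y, g (e.symm y) = y := fun y =>
    StrictMono.orderIsoOfSurjective_self_symm_apply g hgmono hgsurj y
  have hψleft : ∀ x, e.symm (g x) = x := fun x =>
    StrictMono.orderIsoOfSurjective_symm_apply_self g hgmono hgsurj x
  -- derivative of the inverse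
  have hψd : ∀ y : ℝ, HasDerivAt (e.symm) (1 + Real.cosh (2 * e.symm y))⁻¹ y := by
    intro y
    refine HasDerivAt.of_local_left_inverse (hψcont.continuousAt) (hgd (e.symm y)) ?_ ?_
    · positivity
    · exact Filter.Eventually.of_forall hψright
  set c := 2 * (p ^ 2 / q ^ 2) * ν with hc
  have hcpos : 0 < c := by positivity
  -- ξ agrees with τ ↦ e.symm (c * τ) on Ioi 0
  have hξeq : ∀ τ ∈ Set.Ioi (0:ℝ), ξ τ = e.symm (c * τ) := by
    intro τ hτ
    have h1 : g (ξ τ) = c * τ := by rw [hg, hξ τ hτ]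
    rw [← h1, hψleft]
  have hξd : ∀ τ ∈ Set.Ioi (0:ℝ),
      HasDerivAt ξ (c / (2 * Real.cosh (ξ τ) ^ 2)) τ := by
    intro τ hτ
    have hF : HasDerivAt (fun s => e.symm (c * s))
        ((1 + Real.cosh (2 * e.symm (c * τ)))⁻¹ * c) τ :=
      (hψd (c * τ)).comp τ (by simpa using (hasDerivAt_id τ).const_mul c)
    have heq : ξ =ᶠ[nhds τ] fun s => e.symm (c * s) := by
      filter_upwards [Ioi_mem_nhds (show (0:ℝ) < τ from hτ)] with s hs
      exact hξeq s hs
    have := heq.hasDerivAt_iff.mpr hF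
    have hval : (1 + Real.cosh (2 * e.symm (c * τ)))⁻¹ * c
        = c / (2 * Real.cosh (ξ τ) ^ 2) := by
      rw [← hξeq τ hτ, Real.cosh_two_mul]
      have h3 : 1 + (Real.cosh (ξ τ) ^ 2 + Real.sinh (ξ τ) ^ 2)
          = 2 * Real.cosh (ξ τ) ^ 2 := by
        have := Real.cosh_sq (ξ τ); linarith
      rw [h3, inv_mul_eq_div]
    rwa [hval] at this
  refine ⟨fun x _ => (hgd x).differentiableAt, hgmono.strictMonoOn _, ?_, ?_⟩
  · -- BijOn
    refine ⟨fun x hx => ?_, hgmono.injective.injOn, fun y hy => ?_⟩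
    · have := hgmono (show (0:ℝ) < x from hx)
      rw [hg0] at this
      exact this
    · obtain ⟨x, hx⟩ := hgsurj y
      refine ⟨x, ?_, hx⟩
      by_contra hxn
      have hx0 : x ≤ 0 := le_of_not_gt hxn
      have : g x ≤ g 0 := hgmono.monotone hx0
      rw [hg0, hx] at this
      exact absurd hy (by simpa using not_lt.mpr this)
  · intro τ hτ
    set S := Real.sinh (ξ τ) with hS
    set C := Real.cosh (ξ τ) with hC
    have hCpos : 0 < C := Real.cosh_pos _
    have hSpos : 0 < S := Real.sinh_pos_iff.mpr (hξpos τ hτ)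
    have hC2 : C ^ 2 = S ^ 2 + 1 := Real.cosh_sq (ξ τ)
    have hξ' := hξd τ hτ
    -- derivative of sinh ∘ ξ and cosh ∘ ξ
    have hSd : HasDerivAt (fun s => Real.sinh (ξ s)) (C * (c / (2 * C ^ 2))) τ :=
      (Real.hasDerivAt_sinh (ξ τ)).comp τ hξ'
    have hCd : HasDerivAt (fun s => Real.cosh (ξ s)) (S * (c / (2 * C ^ 2))) τ :=
      (Real.hasDerivAt_cosh (ξ τ)).comp τ hξ'
    have haτ : a τ = 1 / ν * (S / C) := by
      rw [hadef, Real.tanh_eq_sinh_div_cosh]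
    have hbτ : b τ = q ^ 2 / (p * ν) * (S * C) := hbdef τ
    -- a as a quotient function
    have hafun : a = fun s => 1 / ν * (Real.sinh (ξ s) / Real.cosh (ξ s)) := by
      funext s
      rw [hadef, Real.tanh_eq_sinh_div_cosh]
    have had : HasDerivAt a (1 / ν *
        ((C * (c / (2 * C ^ 2)) * C - S * (S * (c / (2 * C ^ 2)))) / C ^ 2)) τ := by
      rw [hafun]
      exact (hSd.div hCd hCpos.ne').const_mul (1 / ν)
    have hbfun : b = fun s =>
        q ^ 2 / (p * ν) * (Real.sinh (ξ s) * Real.cosh (ξ s)) := funext hbdef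
    have hbd : HasDerivAt b (q ^ 2 / (p * ν) *
        (C * (c / (2 * C ^ 2)) * C + S * (S * (c / (2 * C ^ 2))))) τ := by
      rw [hbfun]
      exact (hSd.mul hCd).const_mul _
    have hq2 : (q : ℝ) ^ 2 ≠ 0 := by positivity
    refine ⟨?_, ?_, ?_, ?_⟩
    · convert had using 1
      rw [haτ, hc]
      field_simp
      ring_nf
      linear_combination (C^2 - S^2) * hC2
    · convert had using 1
      rw [haτ, hbτ, hc]
      field_simp
      ring_nf
      linear_combination (-1) * hC2
    · convert hbd using 1
      rw [haτ, hbτ, hc]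
      field_simp
      ring_nf
      linear_combination (1) * hC2
    · rw [haτ, hbτ]
      field_simp
      ring_nf
      linear_combination (-1) * hC2
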